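/- arXiv:math/0511431 — 3 statements merged into one kernel-verified Lean document; each statement's English description precedes it below -/
import Mathlib

section
/- Let T_n be the number of nilpotent elements of IS_n and L_n the total number of chains of all elements of IS_n. Then T_n = |IS_{n-1}| + L_{n-1}. -/
def IsPInj (n : ℕ) (f : Fin n → Option (Fin n)) : Prop :=
  ∀ a b c, f a = some c → f b = some c → a = b

instance (n : ℕ) : DecidablePred (IsPInj n) := fun _ =>
  inferInstanceAs (Decidable (∀ _ _ _, _ → _ → _))

/-- The symmetric inverse semigroup `IS_n`: partial injective maps on `{1,…,n}`. -/
def PInj (n : ℕ) := {f : Fin n → Option (Fin n) // IsPInj n f}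

instance (n : ℕ) : Fintype (PInj n) := Subtype.fintype _

/-- `iterMap n f k x` is `f^k(x)` as a partial map. -/
def iterMap (n : ℕ) (f : Fin n → Option (Fin n)) : ℕ → Fin n → Option (Fin n)
  | 0, x => some x
  | k + 1, x => (f x).bind (iterMap n f k)

/-- Size of the domain of a partial injection. -/
def domCard (n : ℕ) (α : PInj n) : ℕ :=
  (Finset.univ.filter (fun x => α.val x ≠ none)).card

/-- `α` is nilpotent: some positive power is the empty map. -/
def Nilpotent (n : ℕ) (α : PInj n) : Prop :=
  ∃ k, 0 < k ∧ ∀ x, iterMap n α.val k x = none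

/-- `|IS_m| = ∑_j binom(m,j)^2 j!`. -/
def cardIS (m : ℕ) : ℕ := ∑ j ∈ Finset.range (m + 1), (m.choose j) ^ 2 * j.factorial


namespace S17

def Acyclic (n : ℕ) (f : Fin n → Option (Fin n)) : Prop :=
  ∀ x k, iterMap n f (k+1) x ≠ some x

variable {n : ℕ} {f : Fin n → Option (Fin n)}

lemma iterMap_zero (x : Fin n) : iterMap n f 0 x = some x := rfl

lemma iterMap_succ (k : ℕ) (x : Fin n) : iterMap n f (k+1) x = (f x).bind (iterMap n f k) := rfl

lemma iterMap_one (x : Fin n) : iterMap n f 1 x = f x := by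
  rw [iterMap_succ]; cases f x <;> rfl

lemma iterMap_add (a b : ℕ) (x : Fin n) :
    iterMap n f (a + b) x = (iterMap n f a x).bind (iterMap n f b) := by
  induction a generalizing x with
  | zero => rw [Nat.zero_add, iterMap_zero, Option.bind_some]
  | succ a ih =>
      have : a + 1 + b = (a + b) + 1 := by omega
      rw [this, iterMap_succ, iterMap_succ]
      cases f x with
      | none => rfl
      | some y => simp only [Option.bind_some]; exact ih y

lemma iterMap_comp {a b : ℕ} {x z w : Fin n} (h1 : iterMap n f a x = some z)
    (h2 : iterMap n f b z = some w) : iterMap n f (a + b) x = some w := by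
  rw [iterMap_add, h1, Option.bind_some]; exact h2

lemma iterMap_none_mono {a b : ℕ} {x : Fin n} (h : iterMap n f a x = none) (hab : a ≤ b) :
    iterMap n f b x = none := by
  obtain ⟨c, rfl⟩ := Nat.exists_eq_add_of_le hab
  rw [iterMap_add, h]; rfl

lemma iterMap_isSome_mono {a b : ℕ} {x : Fin n} (h : iterMap n f b x ≠ none) (hab : a ≤ b) :
    iterMap n f a x ≠ none := fun hn => h (iterMap_none_mono hn hab)

lemma iterMap_last_step {j : ℕ} {x t : Fin n} (h : iterMap n f (j+1) x = some t) :
    ∃ z, iterMap n f j x = some z ∧ f z = some t := by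
  rw [iterMap_add j 1] at h
  cases hz : iterMap n f j x with
  | none => rw [hz] at h; simp at h
  | some z =>
      rw [hz, Option.bind_some, iterMap_one] at h
      exact ⟨z, rfl, h⟩

lemma cycle_rotate {c j : ℕ} {x z : Fin n} (hc : iterMap n f c x = some x)
    (hj : iterMap n f j x = some z) (hjc : j ≤ c) : iterMap n f c z = some z := by
  obtain ⟨r, rfl⟩ := Nat.exists_eq_add_of_le hjc
  have h1 : iterMap n f r z = some x := by
    have := iterMap_add j r x (f := f)
    rw [hj] at this
    rw [this] at hc
    simpa using hc
  have h2 := iterMap_comp h1 hj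
  rwa [Nat.add_comm r j] at h2

lemma nilpotent_iff_acyclic (α : PInj n) : Nilpotent n α ↔ Acyclic n α.val := by
  constructor
  · rintro ⟨K, hK, hall⟩ x k hcyc
    -- iterate the cycle K times
    have hcycle : ∀ j : ℕ, iterMap n α.val (j * (k+1)) x = some x := by
      intro j
      induction j with
      | zero => simp only [Nat.zero_mul]; rfl
      | succ j ih =>
          have : (j+1) * (k+1) = j * (k+1) + (k+1) := by ring
          rw [this]
          exact iterMap_comp ih hcyc
    have h1 := hcycle K
    have h2 : iterMap n α.val (K * (k+1)) x = none := by
      apply iterMap_none_mono (hall x)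
      calc K = K * 1 := by ring
        _ ≤ K * (k+1) := Nat.mul_le_mul_left _ (by omega)
    rw [h1] at h2; exact nomatch h2
  · intro hac
    refine ⟨n + 1, by omega, fun x => ?_⟩
    by_contra hne
    have hsome : ∀ i : Fin (n+2), iterMap n α.val i x ≠ none := fun i =>
      iterMap_isSome_mono hne (by omega)
    let u : Fin (n+2) → Fin n := fun i => (iterMap n α.val i x).get (by
      cases h : iterMap n α.val i x with
      | none => exact absurd h (hsome i)
      | some _ => rfl)
    have hu : ∀ i : Fin (n+2), iterMap n α.val i x = some (u i) := by
      intro i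
      simp only [u]
      exact (Option.some_get _).symm
    have hcard : Fintype.card (Fin n) < Fintype.card (Fin (n+2)) := by simp
    obtain ⟨i, j, hij, hueq⟩ := Fintype.exists_ne_map_eq_of_card_lt u hcard
    rcases Ne.lt_or_gt hij with hlt | hlt
    · -- i < j
      have h1 : iterMap n α.val ((i : ℕ) + ((j : ℕ) - (i : ℕ))) x = some (u j) := by
        have : (i : ℕ) + ((j : ℕ) - (i : ℕ)) = (j : ℕ) := by omega
        rw [this]; exact hu j
      rw [iterMap_add, hu i, Option.bind_some, hueq] at h1
      have hpos : (j : ℕ) - (i : ℕ) = ((j : ℕ) - (i : ℕ) - 1) + 1 := by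
        have : (i : ℕ) < (j : ℕ) := hlt
        omega
      rw [hpos] at h1
      exact hac (u j) _ h1
    · have h1 : iterMap n α.val ((j : ℕ) + ((i : ℕ) - (j : ℕ))) x = some (u i) := by
        have : (j : ℕ) + ((i : ℕ) - (j : ℕ)) = (i : ℕ) := by omega
        rw [this]; exact hu i
      rw [iterMap_add, hu j, Option.bind_some, ← hueq] at h1
      have hpos : (i : ℕ) - (j : ℕ) = ((i : ℕ) - (j : ℕ) - 1) + 1 := by
        have : (j : ℕ) < (i : ℕ) := hlt
        omega
      rw [hpos] at h1
      exact hac (u i) _ h1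

/-! ### Insertion of a new top element -/

variable {m : ℕ}

def NotInIm (α : PInj m) : Type := {v : Fin m // ∀ x, α.val x ≠ some v}

abbrev Data (α : PInj m) : Type := Option (Fin m ⊕ (NotInIm α ⊕ Unit))

def loopD (α : PInj m) : Data α := some (Sum.inr (Sum.inr ()))

def incOf {α : PInj m} : Data α → Option (Fin m)
  | some (Sum.inl x0) => some x0
  | _ => none

def outOf {α : PInj m} : Data α → Option (Fin (m+1))
  | none => none
  | some (Sum.inl x0) => (α.val x0).map Fin.castSucc
  | some (Sum.inr (Sum.inl v)) => some v.1.castSucc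
  | some (Sum.inr (Sum.inr _)) => some (Fin.last m)

def insVal (a : Fin m → Option (Fin m)) (inc : Option (Fin m)) (out : Option (Fin (m+1))) :
    Fin (m+1) → Option (Fin (m+1)) :=
  Fin.lastCases out
    (fun x => if inc = some x then some (Fin.last m) else (a x).map Fin.castSucc)

lemma insVal_last {a : Fin m → Option (Fin m)} {inc : Option (Fin m)}
    {out : Option (Fin (m+1))} : insVal a inc out (Fin.last m) = out :=
  Fin.lastCases_last

lemma insVal_castSucc {a : Fin m → Option (Fin m)} {inc : Option (Fin m)}
    {out : Option (Fin (m+1))} (x : Fin m) :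
    insVal a inc out x.castSucc
      = if inc = some x then some (Fin.last m) else (a x).map Fin.castSucc :=
  Fin.lastCases_castSucc x

lemma castSucc_ne_last (x : Fin m) : x.castSucc ≠ Fin.last m :=
  (Fin.castSucc_lt_last x).ne

lemma map_castSucc_ne_some_last (o : Option (Fin m)) :
    o.map Fin.castSucc ≠ some (Fin.last m) := by
  cases o with
  | none => simp
  | some y => simp [castSucc_ne_last y]

lemma map_castSucc_eq_iff (o : Option (Fin m)) (y : Fin m) :
    o.map Fin.castSucc = some y.castSucc ↔ o = some y := by
  cases o with
  | none => simp
  | some z => simp [Fin.castSucc_inj]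

/-- H1 -/
lemma ins_eq_last_iff {a : Fin m → Option (Fin m)} {inc : Option (Fin m)}
    {out : Option (Fin (m+1))} (x : Fin m) :
    insVal a inc out x.castSucc = some (Fin.last m) ↔ inc = some x := by
  rw [insVal_castSucc]
  by_cases h : inc = some x
  · simp [h]
  · rw [if_neg h]
    exact iff_of_false (map_castSucc_ne_some_last _) h

/-- H2 -/
lemma ins_eq_castSucc_iff {a : Fin m → Option (Fin m)} {inc : Option (Fin m)}
    {out : Option (Fin (m+1))} (x y : Fin m) :
    insVal a inc out x.castSucc = some y.castSucc ↔ (inc ≠ some x ∧ a x = some y) := by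
  rw [insVal_castSucc]
  by_cases h : inc = some x
  · simp [h, (castSucc_ne_last y).symm]
  · simp [h, map_castSucc_eq_iff]

lemma ins_not_mixed (α : PInj m) (d : Data α) (x : Fin m) (c : Fin (m+1))
    (hx : insVal α.val (incOf d) (outOf d) x.castSucc = some c)
    (hL : outOf d = some c) : False := by
  induction c using Fin.lastCases with
  | last =>
    have hinc : incOf d = some x := (ins_eq_last_iff x).1 hx
    rcases d with _ | x0 | v | u <;> simp only [incOf] at hinc
    · exact nomatch hinc
    · obtain rfl : x0 = x := Option.some.inj hinc
      exact map_castSucc_ne_some_last _ hL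
    · exact nomatch hinc
    · exact nomatch hinc
  | cast c0 =>
    obtain ⟨hinc, hax⟩ := (ins_eq_castSucc_iff x c0).1 hx
    rcases d with _ | x0 | v | u
    · simp [outOf] at hL
    · simp only [outOf] at hL
      have : α.val x0 = some c0 := (map_castSucc_eq_iff _ _).1 hL
      have hx0 : x0 = x := α.2 x0 x c0 this hax
      subst hx0
      simp [incOf] at hinc
    · simp only [outOf, Option.some.injEq, Fin.castSucc_inj] at hL
      exact v.2 x (hL ▸ hax)
    · simp only [outOf, Option.some.injEq] at hL
      exact castSucc_ne_last c0 hL.symm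

lemma isPInj_insVal (α : PInj m) (d : Data α) :
    IsPInj (m+1) (insVal α.val (incOf d) (outOf d)) := by
  intro a b c hab hbc
  induction a using Fin.lastCases with
  | last =>
    induction b using Fin.lastCases with
    | last => rfl
    | cast y =>
      rw [insVal_last] at hab
      exact (ins_not_mixed α d y c hbc hab).elim
  | cast x =>
    induction b using Fin.lastCases with
    | last =>
      rw [insVal_last] at hbc
      exact (ins_not_mixed α d x c hab hbc).elim
    | cast y =>
      induction c using Fin.lastCases with
      | last =>
        have h1 := (ins_eq_last_iff (a := α.val) (out := outOf d) x).1 hab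
        have h2 := (ins_eq_last_iff (a := α.val) (out := outOf d) y).1 hbc
        rw [h1] at h2
        obtain rfl : x = y := Option.some.inj h2
        rfl
      | cast c0 =>
        obtain ⟨_, hax⟩ := (ins_eq_castSucc_iff x c0).1 hab
        obtain ⟨_, hay⟩ := (ins_eq_castSucc_iff y c0).1 hbc
        have : x = y := α.2 x y c0 hax hay
        rw [this]

def Ins (α : PInj m) (d : Data α) : PInj (m+1) :=
  ⟨insVal α.val (incOf d) (outOf d), isPInj_insVal α d⟩

def FIns : (Σ α : PInj m, Data α) → PInj (m+1) := fun s => Ins s.1 s.2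

/-! ### Bijectivity of FIns -/

lemma eq_inl_of_incOf {α : PInj m} {d : Data α} {x : Fin m} (h : incOf d = some x) :
    d = some (Sum.inl x) := by
  rcases d with _ | x0 | v | u <;> simp only [incOf] at h
  · exact nomatch h
  · rw [Option.some.inj h]
  · exact nomatch h
  · exact nomatch h

lemma FIns_injective : Function.Injective (FIns (m := m)) := by
  rintro ⟨α, d⟩ ⟨α', d'⟩ heq
  have hval : ∀ y, insVal α.val (incOf d) (outOf d) y = insVal α'.val (incOf d') (outOf d') y :=
    fun y => congrFun (congrArg Subtype.val heq) y
  have hout : outOf d = outOf d' := by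
    have := hval (Fin.last m)
    rwa [insVal_last, insVal_last] at this
  have hinc : incOf d = incOf d' := by
    have key : ∀ x : Fin m, incOf d = some x ↔ incOf d' = some x := by
      intro x
      rw [← ins_eq_last_iff (a := α.val) (out := outOf d),
        ← ins_eq_last_iff (a := α'.val) (out := outOf d'), hval x.castSucc]
    cases h1 : incOf d with
    | none =>
      cases h2 : incOf d' with
      | none => rfl
      | some x => exact absurd ((key x).2 h2) (by simp [h1])
    | some x => exact ((key x).1 h1).symm
  have hα : α = α' := by
    apply Subtype.ext; funext x
    by_cases hx : incOf d = some x
    · have hd : d = some (Sum.inl x) := eq_inl_of_incOf hx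
      have hd' : d' = some (Sum.inl x) := eq_inl_of_incOf (hinc ▸ hx)
      rw [hd, hd'] at hout
      simp only [outOf] at hout
      exact Option.map_injective (Fin.castSucc_injective m) hout
    · have h1 := hval x.castSucc
      rw [insVal_castSucc, insVal_castSucc, if_neg hx, if_neg (hinc ▸ hx)] at h1
      exact Option.map_injective (Fin.castSucc_injective m) h1
  subst hα
  congr 1
  rcases d with _ | x0 | v | ⟨⟩ <;> rcases d' with _ | x0' | v' | ⟨⟩ <;>
      simp only [incOf, outOf] at hinc hout <;>
    first
      | rfl
      | (cases hinc; done)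
      | (cases hout; done)
      | rw [Option.some.inj hinc]
      | exact absurd (Option.some.inj hout) (castSucc_ne_last _)
      | exact absurd (Option.some.inj hout).symm (castSucc_ne_last _)
      | rw [Subtype.ext (Fin.castSucc_inj.1 (Option.some.inj hout))]

/-! ### Surjectivity -/

def dn : Fin (m+1) → Option (Fin m) := Fin.lastCases none some

lemma dn_castSucc (x : Fin m) : dn x.castSucc = some x := Fin.lastCases_castSucc x
lemma dn_last : dn (Fin.last m) = (none : Option (Fin m)) := Fin.lastCases_last

def ctrVal (b : Fin (m+1) → Option (Fin (m+1))) : Fin m → Option (Fin m) :=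
  fun x => (b x.castSucc).bind (Fin.lastCases ((b (Fin.last m)).bind dn) some)

lemma ctrVal_eq_some_iff (b : Fin (m+1) → Option (Fin (m+1))) (x z : Fin m) :
    ctrVal b x = some z ↔
      b x.castSucc = some z.castSucc ∨
        (b x.castSucc = some (Fin.last m) ∧ b (Fin.last m) = some z.castSucc) := by
  unfold ctrVal
  cases hb : b x.castSucc with
  | none => simp
  | some w =>
    rw [Option.bind_some]
    induction w using Fin.lastCases with
    | last =>
      rw [Fin.lastCases_last]
      cases hL : b (Fin.last m) with
      | none => simp [(castSucc_ne_last z).symm]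
      | some w' =>
        rw [Option.bind_some]
        induction w' using Fin.lastCases with
        | last => simp [dn_last, (castSucc_ne_last z).symm]
        | cast z' => simp [dn_castSucc, (castSucc_ne_last z).symm, Fin.castSucc_inj]
    | cast z' =>
      rw [Fin.lastCases_castSucc]
      simp [Fin.castSucc_inj]

lemma isPInj_ctrVal (β : PInj (m+1)) : IsPInj m (ctrVal β.val) := by
  intro x y c h1 h2
  rw [ctrVal_eq_some_iff] at h1 h2
  rcases h1 with h1 | ⟨h1a, h1b⟩ <;> rcases h2 with h2 | ⟨h2a, h2b⟩
  · exact Fin.castSucc_inj.1 (β.2 _ _ _ h1 h2)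
  · exact absurd (β.2 _ _ _ h1 h2b) (castSucc_ne_last x)
  · exact absurd (β.2 _ _ _ h1b h2).symm (castSucc_ne_last y)
  · exact Fin.castSucc_inj.1 (β.2 _ _ (Fin.last m) h1a h2a)

lemma ctr_map_of_ne_last {β : PInj (m+1)} {x : Fin m}
    (hnl : β.val x.castSucc ≠ some (Fin.last m)) :
    (ctrVal β.val x).map Fin.castSucc = β.val x.castSucc := by
  cases hb : β.val x.castSucc with
  | none => unfold ctrVal; rw [hb]; rfl
  | some w =>
    induction w using Fin.lastCases with
    | last => exact absurd hb hnl
    | cast w' =>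
      unfold ctrVal
      rw [hb, Option.bind_some, Fin.lastCases_castSucc]
      rfl

lemma ctr_map_of_eq_last {β : PInj (m+1)} {x0 : Fin m}
    (hx0 : β.val x0.castSucc = some (Fin.last m)) :
    (ctrVal β.val x0).map Fin.castSucc = β.val (Fin.last m) := by
  unfold ctrVal
  rw [hx0, Option.bind_some, Fin.lastCases_last]
  cases hL : β.val (Fin.last m) with
  | none => rfl
  | some w =>
    induction w using Fin.lastCases with
    | last => exact absurd (β.2 _ _ _ hx0 hL) (castSucc_ne_last x0)
    | cast w' => rw [Option.bind_some, dn_castSucc]; rfl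

lemma FIns_surjective : Function.Surjective (FIns (m := m)) := by
  intro β
  set A : PInj m := ⟨ctrVal β.val, isPInj_ctrVal β⟩ with hA
  by_cases hex : ∃ x0 : Fin m, β.val x0.castSucc = some (Fin.last m)
  · obtain ⟨x0, hx0⟩ := hex
    refine ⟨⟨A, some (Sum.inl x0)⟩, Subtype.ext (funext fun y => ?_)⟩
    induction y using Fin.lastCases with
    | last =>
      show insVal _ _ _ _ = _
      rw [insVal_last]
      exact ctr_map_of_eq_last hx0
    | cast x =>
      show insVal A.val (incOf (some (Sum.inl x0) : Data A))
        (outOf (some (Sum.inl x0) : Data A)) x.castSucc = _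
      rw [insVal_castSucc]
      rw [show incOf (some (Sum.inl x0) : Data A) = some x0 from rfl]
      by_cases hxx : x0 = x
      · subst hxx
        rw [if_pos rfl]
        exact hx0.symm
      · rw [if_neg (by simpa using hxx)]
        refine ctr_map_of_ne_last (fun hc => ?_)
        exact hxx (Fin.castSucc_inj.1 (β.2 _ _ _ hx0 hc))
  · push_neg at hex
    have genCast : ∀ (d : Data A), incOf d = none →
        ∀ x : Fin m, insVal A.val (incOf d) (outOf d) x.castSucc = β.val x.castSucc := by
      intro d hd x
      rw [insVal_castSucc, hd, if_neg (by simp)]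
      exact ctr_map_of_ne_last (hex x)
    cases hL : β.val (Fin.last m) with
    | none =>
      refine ⟨⟨A, none⟩, Subtype.ext (funext fun y => ?_)⟩
      induction y using Fin.lastCases with
      | last => show insVal _ _ _ _ = _; rw [insVal_last]; exact hL.symm
      | cast x => exact genCast none rfl x
    | some w =>
      induction w using Fin.lastCases with
      | last =>
        refine ⟨⟨A, loopD A⟩, Subtype.ext (funext fun y => ?_)⟩
        induction y using Fin.lastCases with
        | last => show insVal _ _ _ _ = _; rw [insVal_last]; exact hL.symm
        | cast x => exact genCast (loopD A) rfl x
      | cast v =>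
        have hv : ∀ x, A.val x ≠ some v := by
          intro x hAx
          rw [hA] at hAx
          rw [ctrVal_eq_some_iff] at hAx
          rcases hAx with h | ⟨h1, _⟩
          · exact absurd (β.2 _ _ _ h hL) (castSucc_ne_last x)
          · exact hex x h1
        refine ⟨⟨A, some (Sum.inr (Sum.inl ⟨v, hv⟩))⟩, Subtype.ext (funext fun y => ?_)⟩
        induction y using Fin.lastCases with
        | last => show insVal _ _ _ _ = _; rw [insVal_last]; exact hL.symm
        | cast x => exact genCast (some (Sum.inr (Sum.inl ⟨v, hv⟩))) rfl x

noncomputable def EIns : (Σ α : PInj m, Data α) ≃ PInj (m+1) :=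
  Equiv.ofBijective FIns ⟨FIns_injective, FIns_surjective⟩

/-! ### domCard under insertion -/

def dCost {α : PInj m} : Data α → ℕ
  | none => 0
  | some _ => 1

lemma domCard_eq_sum (n : ℕ) (α : PInj n) :
    domCard n α = ∑ x : Fin n, if α.val x ≠ none then 1 else 0 :=
  Finset.card_filter _ _

lemma ite_map_ne_none (o : Option (Fin m)) :
    (if o.map Fin.castSucc ≠ none then 1 else 0) = if o ≠ none then 1 else 0 := by
  cases o <;> simp

lemma Ins_last {α : PInj m} {d : Data α} : (Ins α d).val (Fin.last m) = outOf d :=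
  insVal_last

lemma domCard_Ins (α : PInj m) (d : Data α) :
    domCard (m+1) (Ins α d) = domCard m α + dCost d := by
  rw [domCard_eq_sum, domCard_eq_sum, Fin.sum_univ_castSucc]
  have hlast : (Ins α d).val (Fin.last m) = outOf d := insVal_last
  have hcast : ∀ x : Fin m, (Ins α d).val x.castSucc
      = if incOf d = some x then some (Fin.last m) else (α.val x).map Fin.castSucc :=
    fun x => insVal_castSucc x
  rcases d with _ | x0 | v | u
  · simp only [hlast, hcast, incOf, outOf, dCost]
    simp [ite_map_ne_none]
  · rw [show incOf (some (Sum.inl x0) : Data α) = some x0 from rfl] at hcast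
    simp only [hlast, hcast, incOf, outOf, dCost]
    have h1 : ∀ x : Fin m,
        (if (if (some x0 : Option (Fin m)) = some x then some (Fin.last m)
              else (α.val x).map Fin.castSucc) ≠ none then 1 else 0)
          = if x = x0 then 1 else (if α.val x ≠ none then 1 else 0) := by
      intro x
      by_cases hx : x = x0
      · subst hx; simp
      · rw [if_neg (fun hc => hx (Option.some.inj hc).symm), if_neg hx, ite_map_ne_none]
    simp only [h1]
    rw [← Finset.add_sum_erase _ _ (Finset.mem_univ x0),
      ← Finset.add_sum_erase _ (fun x => if α.val x ≠ none then 1 else 0) (Finset.mem_univ x0)]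
    rw [if_pos rfl]
    have h2 : ∑ x ∈ Finset.univ.erase x0, (if x = x0 then 1 else (if α.val x ≠ none then 1 else 0))
        = ∑ x ∈ Finset.univ.erase x0, (if α.val x ≠ none then 1 else 0) := by
      apply Finset.sum_congr rfl
      intro x hx
      rw [if_neg (Finset.ne_of_mem_erase hx)]
    rw [h2, ite_map_ne_none]
    by_cases h3 : α.val x0 ≠ none <;> simp [h3] <;> omega
  · simp only [hlast, hcast, incOf, outOf, dCost]
    simp [ite_map_ne_none]
  · simp only [hlast, hcast, incOf, outOf, dCost]
    simp [ite_map_ne_none]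

/-! ### Acyclicity under insertion -/

lemma step_up {α : PInj m} {d : Data α} {x y : Fin m} (h : α.val x = some y) :
    (Ins α d).val x.castSucc = some y.castSucc ∨
      ((Ins α d).val x.castSucc = some (Fin.last m) ∧
        (Ins α d).val (Fin.last m) = some y.castSucc) := by
  by_cases hx : incOf d = some x
  · right
    refine ⟨(ins_eq_last_iff x).2 hx, ?_⟩
    have hd : d = some (Sum.inl x) := eq_inl_of_incOf hx
    show insVal _ _ _ _ = _
    rw [insVal_last, hd]
    simp only [outOf, h]
    rfl
  · left
    exact (ins_eq_castSucc_iff x y).2 ⟨hx, h⟩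

lemma up_sim {α : PInj m} {d : Data α} :
    ∀ k x y, iterMap m α.val k x = some y →
      ∃ j, k ≤ j ∧ iterMap (m+1) (Ins α d).val j x.castSucc = some y.castSucc := by
  intro k
  induction k with
  | zero =>
    intro x y h
    obtain rfl : x = y := Option.some.inj h
    exact ⟨0, le_rfl, rfl⟩
  | succ k ih =>
    intro x y h
    rw [iterMap_succ] at h
    cases hz : α.val x with
    | none => rw [hz] at h; exact nomatch h
    | some z =>
      rw [hz, Option.bind_some] at h
      obtain ⟨j, hj, hiter⟩ := ih z y h
      rcases step_up (d := d) hz with h1 | ⟨h1, h2⟩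
      · refine ⟨1 + j, by omega, ?_⟩
        refine iterMap_comp ?_ hiter
        rw [iterMap_one]; exact h1
      · have s1 : iterMap (m+1) (Ins α d).val 1 x.castSucc = some (Fin.last m) := by
          rw [iterMap_one]; exact h1
        have s2 : iterMap (m+1) (Ins α d).val 1 (Fin.last m) = some z.castSucc := by
          rw [iterMap_one]; exact h2
        exact ⟨1 + 1 + j, by omega, iterMap_comp (iterMap_comp s1 s2) hiter⟩

lemma step_down {α : PInj m} {d : Data α} {x y : Fin m}
    (h : (Ins α d).val x.castSucc = some y.castSucc) : α.val x = some y :=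
  ((ins_eq_castSucc_iff x y).1 h).2

lemma outOf_eq_some_last {α : PInj m} {d : Data α} (h : outOf d = some (Fin.last m)) :
    d = loopD α := by
  rcases d with _ | x0 | v | u
  · simp [outOf] at h
  · exact absurd h (map_castSucc_ne_some_last _)
  · exact absurd (Option.some.inj h) (castSucc_ne_last _)
  · rfl

lemma down_sim {α : PInj m} {d : Data α} :
    ∀ k x y, iterMap (m+1) (Ins α d).val k x.castSucc = some y.castSucc →
      (∀ j, j ≤ k → iterMap (m+1) (Ins α d).val j x.castSucc ≠ some (Fin.last m)) →
      iterMap m α.val k x = some y := by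
  intro k
  induction k with
  | zero =>
    intro x y h _
    obtain rfl : x = y := Fin.castSucc_inj.1 (Option.some.inj h)
    rfl
  | succ k ih =>
    intro x y h havoid
    rw [iterMap_succ] at h
    cases hb : (Ins α d).val x.castSucc with
    | none => rw [hb] at h; exact nomatch h
    | some w =>
      rw [hb, Option.bind_some] at h
      have hwne : w ≠ Fin.last m := by
        intro hw
        apply havoid 1 (by omega)
        rw [iterMap_one, hb, hw]
      induction w using Fin.lastCases with
      | last => exact absurd rfl hwne
      | cast z =>
        have hαx : α.val x = some z := step_down hb
        have hshift : ∀ j, iterMap (m+1) (Ins α d).val (1 + j) x.castSucc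
            = iterMap (m+1) (Ins α d).val j z.castSucc := by
          intro j
          rw [iterMap_add, iterMap_one, hb, Option.bind_some]
        have havoid' : ∀ j, j ≤ k →
            iterMap (m+1) (Ins α d).val j z.castSucc ≠ some (Fin.last m) := by
          intro j hj
          rw [← hshift j]
          exact havoid (1 + j) (by omega)
        have := ih z y h havoid'
        rw [iterMap_succ, hαx, Option.bind_some]
        exact this

lemma keyL {α : PInj m} {d : Data α} (hac : Acyclic m α.val) (hd : d ≠ loopD α) :
    ∀ c, iterMap (m+1) (Ins α d).val (c+1) (Fin.last m) ≠ some (Fin.last m) := by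
  intro c
  induction c using Nat.strong_induction_on with
  | _ c IH =>
    intro h
    by_cases hprev : ∃ c' , c' < c ∧ iterMap (m+1) (Ins α d).val (c'+1) (Fin.last m)
        = some (Fin.last m)
    · obtain ⟨c', hc', h'⟩ := hprev
      exact IH c' hc' h'
    · push_neg at hprev
      rw [iterMap_succ] at h
      cases hw : (Ins α d).val (Fin.last m) with
      | none => rw [hw] at h; exact nomatch h
      | some w =>
        rw [hw, Option.bind_some] at h
        induction w using Fin.lastCases with
        | last =>
          have : outOf d = some (Fin.last m) := by rwa [Ins_last] at hw
          exact hd (outOf_eq_some_last this)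
        | cast w' =>
          cases c with
          | zero =>
            exact castSucc_ne_last w' (Option.some.inj h)
          | succ c'' =>
            obtain ⟨z, hz, hstep⟩ := iterMap_last_step h
            induction z using Fin.lastCases with
            | last =>
              rw [hw] at hstep
              exact castSucc_ne_last w' (Option.some.inj hstep)
            | cast x0 =>
              have hinc : incOf d = some x0 := (ins_eq_last_iff x0).1 hstep
              have hdd : d = some (Sum.inl x0) := eq_inl_of_incOf hinc
              have hout : outOf d = some w'.castSucc := by rwa [Ins_last] at hw
              have hαx0 : α.val x0 = some w' := by
                rw [hdd] at hout
                simp only [outOf] at hout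
                exact (map_castSucc_eq_iff _ _).1 hout
              have havoid : ∀ j, j ≤ c'' →
                  iterMap (m+1) (Ins α d).val j w'.castSucc ≠ some (Fin.last m) := by
                intro j hj hjl
                apply hprev j (by omega)
                rw [iterMap_succ, hw, Option.bind_some]
                exact hjl
              have hdown : iterMap m α.val c'' w' = some x0 := down_sim c'' w' x0 hz havoid
              have : iterMap m α.val (c'' + 1) w' = some w' := by
                refine iterMap_comp hdown ?_
                rw [iterMap_one]; exact hαx0
              exact hac w' c'' this

lemma acyclic_Ins_iff (α : PInj m) (d : Data α) :
    Acyclic (m+1) (Ins α d).val ↔ (Acyclic m α.val ∧ d ≠ loopD α) := by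
  constructor
  · intro hacβ
    constructor
    · intro x k hcyc
      obtain ⟨j, hj, hiter⟩ := up_sim (d := d) (k+1) x x hcyc
      obtain ⟨j', rfl⟩ : ∃ j', j = j' + 1 := ⟨j - 1, by omega⟩
      exact hacβ x.castSucc j' hiter
    · intro hld
      apply hacβ (Fin.last m) 0
      rw [iterMap_one, Ins_last, hld]
      rfl
  · rintro ⟨hacα, hd⟩ t k hcyc
    induction t using Fin.lastCases with
    | last => exact keyL hacα hd k hcyc
    | cast x =>
      by_cases hL : ∃ j, j ≤ k ∧ iterMap (m+1) (Ins α d).val j x.castSucc = some (Fin.last m)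
      · obtain ⟨j, hjk, hjl⟩ := hL
        exact keyL hacα hd k (cycle_rotate hcyc hjl (by omega))
      · push_neg at hL
        have havoid : ∀ j, j ≤ k + 1 →
            iterMap (m+1) (Ins α d).val j x.castSucc ≠ some (Fin.last m) := by
          intro j hj
          rcases Nat.lt_or_ge j (k+1) with h | h
          · exact hL j (by omega)
          · obtain rfl : j = k + 1 := by omega
            rw [hcyc]
            exact fun hc => castSucc_ne_last x (Option.some.inj hc)
        exact hacα x k (down_sim (k+1) x x hcyc havoid)

/-! ### Counting -/

open scoped Classical

noncomputable def fc (m k : ℕ) : ℕ :=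
  (Finset.univ.filter (fun α : PInj m => domCard m α = k)).card

noncomputable def gc (m k : ℕ) : ℕ :=
  (Finset.univ.filter (fun α : PInj m => domCard m α = k ∧ Acyclic m α.val)).card

lemma domCard_le (n : ℕ) (α : PInj n) : domCard n α ≤ n := by
  calc domCard n α ≤ Finset.univ.card := Finset.card_filter_le _ _
    _ = n := by simp

lemma fc_eq_zero (m k : ℕ) (h : m < k) : fc m k = 0 := by
  rw [fc, Finset.card_eq_zero, Finset.filter_eq_empty_iff]
  intro α _
  exact fun hc => absurd (hc ▸ domCard_le m α) (by omega)

lemma gc_eq_zero (m k : ℕ) (h : m < k) : gc m k = 0 := by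
  rw [gc, Finset.card_eq_zero, Finset.filter_eq_empty_iff]
  intro α _
  rintro ⟨hc, -⟩
  exact absurd (hc ▸ domCard_le m α) (by omega)

/-! ### Cardinality of NotInIm -/

noncomputable instance (α : PInj m) : Fintype (NotInIm α) := by
  unfold NotInIm; infer_instance

noncomputable instance (α : PInj m) : Fintype (Data α) := by
  unfold Data; infer_instance

lemma option_get_eq {X : Type*} (o : Option X) (h : o.isSome) (w : X) (he : o = some w) :
    o.get h = w := by subst he; rfl

lemma card_NotInIm (α : PInj m) : Nat.card (NotInIm α) = m - domCard m α := by
  have hDI : (Finset.univ.filter (fun v : Fin m => ∃ x, α.val x = some v)).card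
      = domCard m α := by
    rw [domCard]
    refine (Finset.card_bij'
      (fun v hv => Classical.choose (Finset.mem_filter.1 hv).2)
      (fun x hx => (α.val x).get (Option.isSome_iff_ne_none.2 (Finset.mem_filter.1 hx).2))
      ?_ ?_ ?_ ?_)
    · intro v hv
      have hc := Classical.choose_spec (Finset.mem_filter.1 hv).2
      simp only [Finset.mem_filter, Finset.mem_univ, true_and]
      rw [hc]; exact nofun
    · intro x hx
      simp only [Finset.mem_filter, Finset.mem_univ, true_and]
      exact ⟨x, (Option.some_get _).symm⟩
    · intro v hv
      have hc := Classical.choose_spec (Finset.mem_filter.1 hv).2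
      exact option_get_eq _ _ _ hc
    · intro x hx
      have hne := (Finset.mem_filter.1 hx).2
      have hg : α.val x = some ((α.val x).get (Option.isSome_iff_ne_none.2 hne)) :=
        (Option.some_get _).symm
      have hvmem : ((α.val x).get (Option.isSome_iff_ne_none.2 hne)) ∈
          Finset.univ.filter (fun v : Fin m => ∃ x, α.val x = some v) := by
        simp only [Finset.mem_filter, Finset.mem_univ, true_and]
        exact ⟨x, hg⟩
      have hc := Classical.choose_spec (Finset.mem_filter.1 hvmem).2
      exact α.2 _ _ _ hc hg
  have hfin : Fintype.card (NotInIm α) = m - domCard m α := by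
    have h1 : Fintype.card (NotInIm α)
        = Fintype.card {v : Fin m // ¬ ∃ x, α.val x = some v} := by
      apply Fintype.card_congr
      apply Equiv.subtypeEquivRight
      intro v
      constructor
      · rintro h ⟨x, hx⟩; exact h x hx
      · intro h x hx; exact h ⟨x, hx⟩
    rw [h1, Fintype.card_subtype_compl, Fintype.card_subtype, hDI, Fintype.card_fin]
  rw [Nat.card_eq_fintype_card, hfin]

/-! ### small equivs for Data counting -/

def optionNeNone (X : Type*) : {d : Option X // d ≠ none} ≃ X where
  toFun d := d.1.get (Option.isSome_iff_ne_none.2 d.2)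
  invFun x := ⟨some x, nofun⟩
  left_inv := by
    rintro ⟨d, h⟩
    apply Subtype.ext
    simp
  right_inv := fun x => rfl

def optionNeNoneNe (X : Type*) (x0 : X) :
    {d : Option X // d ≠ none ∧ d ≠ some x0} ≃ {x : X // x ≠ x0} where
  toFun d := ⟨d.1.get (Option.isSome_iff_ne_none.2 d.2.1), fun h => by
    apply d.2.2
    rw [← Option.some_get (Option.isSome_iff_ne_none.2 d.2.1), h]⟩
  invFun x := ⟨some x.1, ⟨nofun,
    fun h => x.2 (Option.some.inj h)⟩⟩
  left_inv := by
    rintro ⟨d, h⟩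
    apply Subtype.ext
    simp
  right_inv := fun x => rfl

def sumNeEquiv (X Y : Type*) :
    {s : X ⊕ (Y ⊕ Unit) // s ≠ Sum.inr (Sum.inr ())} ≃ X ⊕ Y where
  toFun s := match s with
    | ⟨Sum.inl x, _⟩ => Sum.inl x
    | ⟨Sum.inr (Sum.inl y), _⟩ => Sum.inr y
    | ⟨Sum.inr (Sum.inr u), h⟩ => absurd (by cases u; rfl) h
  invFun s := match s with
    | Sum.inl x => ⟨Sum.inl x, nofun⟩
    | Sum.inr y => ⟨Sum.inr (Sum.inl y), nofun⟩
  left_inv := by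
    rintro ⟨(x | y | u), h⟩
    · rfl
    · rfl
    · exact absurd (by cases u; rfl) h
  right_inv := by rintro (x | y) <;> rfl

/-! ### per-α data counts -/

lemma fintype_card_NotInIm (α : PInj m) : Fintype.card (NotInIm α) = m - domCard m α := by
  rw [← Nat.card_eq_fintype_card]; exact card_NotInIm α

lemma card_data_fc (α : PInj m) (K : ℕ) :
    Nat.card {d : Data α // domCard m α + dCost d = K}
      = (if domCard m α = K then 1 else 0)
        + (if domCard m α + 1 = K then (m + (m - domCard m α) + 1) else 0) := by
  by_cases h1 : domCard m α = K
  · rw [if_pos h1, if_neg (by omega)]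
    have he : {d : Data α // domCard m α + dCost d = K} ≃ {d : Data α // d = none} := by
      apply Equiv.subtypeEquivRight
      intro d
      cases d with
      | none => simp [dCost, h1]
      | some v => simp [dCost]; omega
    rw [Nat.card_congr he, Nat.card_eq_fintype_card, Fintype.card_subtype_eq]
  · by_cases h2 : domCard m α + 1 = K
    · rw [if_neg h1, if_pos h2, Nat.zero_add]
      have he : {d : Data α // domCard m α + dCost d = K} ≃ {d : Data α // d ≠ none} := by
        apply Equiv.subtypeEquivRight
        intro d
        cases d with
        | none => simp [dCost]; omega
        | some v => simp [dCost, h2]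
      rw [Nat.card_congr (he.trans (optionNeNone _)), Nat.card_eq_fintype_card]
      rw [Fintype.card_sum, Fintype.card_sum, Fintype.card_fin, fintype_card_NotInIm]
      simp
      omega
    · rw [if_neg h1, if_neg h2]
      have : IsEmpty {d : Data α // domCard m α + dCost d = K} := by
        refine ⟨fun d => ?_⟩
        obtain ⟨d, hd⟩ := d
        cases d with
        | none => simp [dCost] at hd; omega
        | some v => simp [dCost] at hd; omega
      rw [Nat.card_of_isEmpty]

lemma card_data_gc (α : PInj m) (K : ℕ) :
    Nat.card {d : Data α // domCard m α + dCost d = K ∧ d ≠ loopD α}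
      = (if domCard m α = K then 1 else 0)
        + (if domCard m α + 1 = K then (m + (m - domCard m α)) else 0) := by
  by_cases h1 : domCard m α = K
  · rw [if_pos h1, if_neg (by omega)]
    have he : {d : Data α // domCard m α + dCost d = K ∧ d ≠ loopD α}
        ≃ {d : Data α // d = none} := by
      apply Equiv.subtypeEquivRight
      intro d
      cases d with
      | none => simp [dCost, h1, loopD]
      | some v => simp [dCost, loopD]; omega
    rw [Nat.card_congr he, Nat.card_eq_fintype_card, Fintype.card_subtype_eq]
  · by_cases h2 : domCard m α + 1 = K
    · rw [if_neg h1, if_pos h2, Nat.zero_add]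
      have he : {d : Data α // domCard m α + dCost d = K ∧ d ≠ loopD α}
          ≃ {d : Data α // d ≠ none ∧ d ≠ some (Sum.inr (Sum.inr ()))} := by
        apply Equiv.subtypeEquivRight
        intro d
        cases d with
        | none => simp [dCost, loopD]; omega
        | some v => simp [dCost, h2, loopD]
      rw [Nat.card_congr ((he.trans (optionNeNoneNe _ _)).trans (sumNeEquiv _ _)),
        Nat.card_eq_fintype_card, Fintype.card_sum, Fintype.card_fin, fintype_card_NotInIm]
    · rw [if_neg h1, if_neg h2]
      have : IsEmpty {d : Data α // domCard m α + dCost d = K ∧ d ≠ loopD α} := by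
        refine ⟨fun d => ?_⟩
        obtain ⟨d, hd, -⟩ := d
        cases d with
        | none => simp [dCost] at hd; omega
        | some v => simp [dCost] at hd; omega
      rw [Nat.card_of_isEmpty]

/-! ### master counting lemma -/

def sigmaSubtypeEquiv {ι : Type*} (f : ι → Type*) (Q : (Σ i, f i) → Prop) :
    {s : Σ i, f i // Q s} ≃ Σ i, {d : f i // Q ⟨i, d⟩} where
  toFun s := ⟨s.1.1, ⟨s.1.2, by obtain ⟨⟨i, d⟩, h⟩ := s; exact h⟩⟩
  invFun t := ⟨⟨t.1, t.2.1⟩, t.2.2⟩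
  left_inv := by rintro ⟨⟨i, d⟩, h⟩; rfl
  right_inv := by rintro ⟨i, d, h⟩; rfl

lemma count_master (P : PInj (m+1) → Prop) :
    Nat.card {β : PInj (m+1) // P β}
      = ∑ α : PInj m, Nat.card {d : Data α // P (Ins α d)} := by
  have e1 : {s : Σ α : PInj m, Data α // P (FIns s)} ≃ {β : PInj (m+1) // P β} :=
    EIns.subtypeEquiv (fun s => Iff.rfl)
  rw [Nat.card_congr e1.symm,
    Nat.card_congr (sigmaSubtypeEquiv (fun α : PInj m => Data α) (fun s => P (FIns s))),
    Nat.card_eq_fintype_card, Fintype.card_sigma]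
  exact Finset.sum_congr rfl (fun α _ => (Nat.card_eq_fintype_card).symm)

lemma fc_nat_card (M k : ℕ) : fc M k = Nat.card {α : PInj M // domCard M α = k} := by
  rw [Nat.card_eq_fintype_card, Fintype.card_subtype, fc]

lemma gc_nat_card (M k : ℕ) :
    gc M k = Nat.card {α : PInj M // domCard M α = k ∧ Acyclic M α.val} := by
  rw [Nat.card_eq_fintype_card, Fintype.card_subtype, gc]

lemma sum_ite_one {X : Type*} [Fintype X] (P : X → Prop) [DecidablePred P] :
    ∑ a : X, (if P a then 1 else 0) = (Finset.univ.filter P).card :=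
  (Finset.card_filter _ _).symm

lemma sum_ite_const {X : Type*} [Fintype X] (P : X → Prop) [DecidablePred P] (c : ℕ) :
    ∑ a : X, (if P a then c else 0) = (Finset.univ.filter P).card * c := by
  rw [← Finset.sum_filter, Finset.sum_const, smul_eq_mul]

/-! ### recursions -/

lemma fc_succ_sum (K : ℕ) : fc (m+1) K
    = ∑ α : PInj m, ((if domCard m α = K then 1 else 0)
        + (if domCard m α + 1 = K then (m + (m - domCard m α) + 1) else 0)) := by
  rw [fc, Finset.card_filter]
  have : ∑ β : PInj (m+1), (if domCard (m+1) β = K then 1 else 0)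
      = Nat.card {β : PInj (m+1) // domCard (m+1) β = K} := by
    rw [Nat.card_eq_fintype_card, Fintype.card_subtype, Finset.card_filter]
  rw [this, count_master (fun β => domCard (m+1) β = K)]
  refine Finset.sum_congr rfl (fun α _ => ?_)
  rw [← card_data_fc]
  apply Nat.card_congr
  apply Equiv.subtypeEquivRight
  intro d
  rw [domCard_Ins]

lemma gc_succ_sum (K : ℕ) : gc (m+1) K
    = ∑ α : PInj m, (if Acyclic m α.val then
        ((if domCard m α = K then 1 else 0)
          + (if domCard m α + 1 = K then (m + (m - domCard m α)) else 0)) else 0) := by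
  rw [gc, Finset.card_filter]
  have : ∑ β : PInj (m+1), (if domCard (m+1) β = K ∧ Acyclic (m+1) β.val then 1 else 0)
      = Nat.card {β : PInj (m+1) // domCard (m+1) β = K ∧ Acyclic (m+1) β.val} := by
    rw [Nat.card_eq_fintype_card, Fintype.card_subtype, Finset.card_filter]
  rw [this, count_master (fun β => domCard (m+1) β = K ∧ Acyclic (m+1) β.val)]
  refine Finset.sum_congr rfl (fun α _ => ?_)
  by_cases hA : Acyclic m α.val
  · rw [if_pos hA, ← card_data_gc]
    apply Nat.card_congr
    apply Equiv.subtypeEquivRight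
    intro d
    rw [domCard_Ins, acyclic_Ins_iff]
    constructor
    · rintro ⟨h1, _, h2⟩; exact ⟨h1, h2⟩
    · rintro ⟨h1, h2⟩; exact ⟨h1, hA, h2⟩
  · rw [if_neg hA]
    have : IsEmpty {d : Data α // domCard (m+1) (Ins α d) = K ∧ Acyclic (m+1) (Ins α d).val} := by
      refine ⟨fun d => ?_⟩
      exact hA ((acyclic_Ins_iff α d.1).1 d.2.2).1
    rw [Nat.card_of_isEmpty]

lemma fc_zero_rec : fc (m+1) 0 = fc m 0 := by
  rw [fc_succ_sum 0, fc, ← sum_ite_one (fun α : PInj m => domCard m α = 0)]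
  refine Finset.sum_congr rfl (fun α _ => ?_)
  have h2 : ¬ (domCard m α + 1 = 0) := by omega
  rw [if_neg h2, Nat.add_zero]

lemma gc_zero_rec : gc (m+1) 0 = gc m 0 := by
  rw [gc_succ_sum 0, gc,
    ← sum_ite_one (fun α : PInj m => domCard m α = 0 ∧ Acyclic m α.val)]
  refine Finset.sum_congr rfl (fun α _ => ?_)
  have h2 : ¬ (domCard m α + 1 = 0) := by omega
  by_cases hA : Acyclic m α.val
  · rw [if_pos hA, if_neg h2, Nat.add_zero]
    by_cases hd : domCard m α = 0
    · rw [if_pos hd, if_pos ⟨hd, hA⟩]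
    · rw [if_neg hd, if_neg (fun hc : domCard m α = 0 ∧ Acyclic m α.val => hd hc.1)]
  · rw [if_neg hA, if_neg (fun hc : domCard m α = 0 ∧ Acyclic m α.val => hA hc.2)]

lemma fc_rec (k : ℕ) : fc (m+1) (k+1) = fc m (k+1) + (m + (m - k) + 1) * fc m k := by
  rw [fc_succ_sum (k+1), Finset.sum_add_distrib]
  congr 1
  · rw [sum_ite_one (fun α : PInj m => domCard m α = k + 1), fc]
  · have key : ∀ α : PInj m,
        (if domCard m α + 1 = k + 1 then (m + (m - domCard m α) + 1) else 0)
          = (if domCard m α = k then (m + (m - k) + 1) else 0) := by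
      intro α
      by_cases hd : domCard m α = k
      · rw [if_pos (by omega : domCard m α + 1 = k + 1), if_pos hd, hd]
      · rw [if_neg (by omega : ¬ (domCard m α + 1 = k + 1)), if_neg hd]
    rw [Finset.sum_congr rfl (fun α _ => key α),
      sum_ite_const (fun α : PInj m => domCard m α = k), Nat.mul_comm, fc]

lemma gc_rec (k : ℕ) : gc (m+1) (k+1) = gc m (k+1) + (m + (m - k)) * gc m k := by
  rw [gc_succ_sum (k+1)]
  have key : ∀ α : PInj m, (if Acyclic m α.val then
        ((if domCard m α = k + 1 then 1 else 0)
          + (if domCard m α + 1 = k + 1 then (m + (m - domCard m α)) else 0)) else 0)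
      = (if domCard m α = k + 1 ∧ Acyclic m α.val then 1 else 0)
        + (if domCard m α = k ∧ Acyclic m α.val then (m + (m - k)) else 0) := by
    intro α
    by_cases hA : Acyclic m α.val
    · rw [if_pos hA]
      by_cases hd : domCard m α = k + 1
      · have hd2 : ¬ (domCard m α + 1 = k + 1) := by omega
        have hd3 : ¬ (domCard m α = k ∧ Acyclic m α.val) := fun hc => by omega
        rw [if_pos hd, if_pos (⟨hd, hA⟩ : domCard m α = k + 1 ∧ Acyclic m α.val),
          if_neg hd2, if_neg hd3]
      · rw [if_neg hd, if_neg (fun hc : domCard m α = k + 1 ∧ Acyclic m α.val => hd hc.1)]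
        by_cases hd2 : domCard m α = k
        · rw [if_pos (by omega : domCard m α + 1 = k + 1),
            if_pos (⟨hd2, hA⟩ : domCard m α = k ∧ Acyclic m α.val), hd2]
        · rw [if_neg (by omega : ¬ (domCard m α + 1 = k + 1)),
            if_neg (fun hc : domCard m α = k ∧ Acyclic m α.val => hd2 hc.1)]
    · rw [if_neg hA,
        if_neg (fun hc : domCard m α = k + 1 ∧ Acyclic m α.val => hA hc.2),
        if_neg (fun hc : domCard m α = k ∧ Acyclic m α.val => hA hc.2)]
  rw [Finset.sum_congr rfl (fun α _ => key α), Finset.sum_add_distrib,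
    sum_ite_one (fun α : PInj m => domCard m α = k + 1 ∧ Acyclic m α.val),
    sum_ite_const (fun α : PInj m => domCard m α = k ∧ Acyclic m α.val), Nat.mul_comm, gc, gc]

/-! ### base cases -/

instance : Unique (PInj 0) where
  default := ⟨fun x => x.elim0, fun a => a.elim0⟩
  uniq := by
    intro a
    apply Subtype.ext; funext x; exact x.elim0

lemma fc_zero_zero : fc 0 0 = 1 := by
  rw [fc, Finset.filter_true_of_mem (fun α _ => Nat.le_zero.1 (domCard_le 0 α))]
  rw [Finset.card_univ, Fintype.card_unique]

lemma gc_zero_zero : gc 0 0 = 1 := by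
  rw [gc, Finset.filter_true_of_mem
    (fun α _ => ⟨Nat.le_zero.1 (domCard_le 0 α), fun x => x.elim0⟩)]
  rw [Finset.card_univ, Fintype.card_unique]

/-! ### the key induction -/

lemma claim0 : ∀ n : ℕ, gc (n+1) 0 = fc n 0 := by
  intro n
  induction n with
  | zero => rw [gc_zero_rec, gc_zero_zero, fc_zero_zero]
  | succ n ih => rw [gc_zero_rec, ih, fc_zero_rec]

lemma claimS : ∀ n k : ℕ, gc (n+1) (k+1) = fc n (k+1) + (n - k) * fc n k := by
  intro n
  induction n with
  | zero =>
    intro k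
    rw [gc_rec, gc_eq_zero 0 (k+1) (by omega), fc_eq_zero 0 (k+1) (by omega)]
    simp [Nat.zero_sub]
  | succ n ih =>
    intro k
    cases k with
    | zero =>
      rw [gc_rec, ih 0, claim0 n, fc_rec, fc_zero_rec]
      simp only [Nat.sub_zero]
      ring
    | succ j =>
      rw [gc_rec, ih (j+1), ih j, fc_rec, fc_rec]
      simp only [Nat.succ_sub_succ]
      generalize n - (j+1) = a
      generalize n - j = b
      ring

/-! ### totals -/

lemma total_card (M : ℕ) : Nat.card (PInj M) = ∑ k ∈ Finset.range (M+1), fc M k := by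
  rw [Nat.card_eq_fintype_card, ← Finset.card_univ]
  rw [Finset.card_eq_sum_card_fiberwise
    (f := domCard M) (t := Finset.range (M+1))
    (fun α _ => Finset.mem_range.2 (by have := domCard_le M α; omega))]
  rfl

lemma total_sum (M : ℕ) : ∑ α : PInj M, (M - domCard M α)
    = ∑ k ∈ Finset.range (M+1), (M - k) * fc M k := by
  rw [← Finset.sum_fiberwise_of_maps_to
    (g := domCard M) (t := Finset.range (M+1))
    (fun α _ => Finset.mem_range.2 (by have := domCard_le M α; omega))
    (fun α => M - domCard M α)]
  refine Finset.sum_congr rfl (fun k _ => ?_)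
  have : ∀ α ∈ Finset.univ.filter (fun α : PInj M => domCard M α = k),
      M - domCard M α = M - k := by
    intro α hα
    rw [(Finset.mem_filter.1 hα).2]
  rw [Finset.sum_congr rfl this, Finset.sum_const, smul_eq_mul, fc, Nat.mul_comm]

lemma total_g (M : ℕ) : Set.ncard {α : PInj M | Nilpotent M α}
    = ∑ k ∈ Finset.range (M+1), gc M k := by
  rw [← Nat.card_coe_set_eq]
  have e1 : {α : PInj M // Nilpotent M α} ≃ {α : PInj M // Acyclic M α.val} :=
    Equiv.subtypeEquivRight (fun α => nilpotent_iff_acyclic α)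
  have : Nat.card {α : PInj M | Nilpotent M α} = Nat.card {α : PInj M // Acyclic M α.val} :=
    Nat.card_congr e1
  rw [this, Nat.card_eq_fintype_card, Fintype.card_subtype]
  rw [Finset.card_eq_sum_card_fiberwise
    (f := domCard M) (t := Finset.range (M+1))
    (fun α _ => Finset.mem_range.2 (by have := domCard_le M α; omega))]
  refine Finset.sum_congr rfl (fun k _ => ?_)
  rw [gc, Finset.filter_filter]
  congr 1
  apply Finset.filter_congr
  intro α _
  exact and_comm

end S17

open S17 in
theorem stmt17 (n : ℕ) (h : 0 < n) :
    Set.ncard {α : PInj n | Nilpotent n α}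
      = Nat.card (PInj (n - 1)) + ∑ α : PInj (n - 1), ((n - 1) - domCard (n - 1) α) := by
  obtain ⟨m, rfl⟩ : ∃ m, n = m + 1 := ⟨n - 1, by omega⟩
  show Set.ncard {α : PInj (m+1) | Nilpotent (m+1) α}
      = Nat.card (PInj m) + ∑ α : PInj m, (m - domCard m α)
  rw [total_g (m+1), total_card m, total_sum m]
  rw [Finset.sum_range_succ' (fun k => gc (m+1) k) (m+1)]
  rw [Finset.sum_congr rfl (fun k (_ : k ∈ Finset.range (m+1)) => claimS m k),
    Finset.sum_add_distrib, claim0 m]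
  have h1 : (∑ k ∈ Finset.range (m+1), fc m (k+1)) + fc m 0
      = ∑ k ∈ Finset.range (m+1), fc m k := by
    rw [← Finset.sum_range_succ' (fc m) (m+1), Finset.sum_range_succ,
      fc_eq_zero m (m+1) (by omega), Nat.add_zero]
  omega
end

section
/- Let T_n be the number of nilpotent elements of IS_n. Then |IS_n| = sum over k from 0 to n of [n]_k * T_{n-k}, where [n]_k = n!/(n-k)! and T_0 = 1. -/
set_option linter.unusedVariables false

namespace Aux

/-- generic iteration of a partial map -/
def pIter {σ : Type*} (g : σ → Option σ) : ℕ → σ → Option σ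
  | 0, x => some x
  | k + 1, x => (g x).bind (pIter g k)

lemma iterMap_eq_pIter (n : ℕ) (f : Fin n → Option (Fin n)) : iterMap n f = pIter f := by
  funext k; induction k with
  | zero => rfl
  | succ k ih => funext x; show (f x).bind (iterMap n f k) = (f x).bind (pIter f k); rw [ih]

variable {σ : Type*} {g : σ → Option σ}

lemma pIter_add (a b : ℕ) (x : σ) :
    pIter g (a + b) x = (pIter g a x).bind (pIter g b) := by
  induction a generalizing x with
  | zero => simp [pIter]
  | succ a ih =>
      rw [Nat.succ_add]
      simp only [pIter, Option.bind_assoc]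
      cases g x with
      | none => rfl
      | some y => simpa using ih y

lemma pIter_none_mono {a b : ℕ} {x : σ} (h : pIter g a x = none) (hab : a ≤ b) :
    pIter g b x = none := by
  obtain ⟨c, rfl⟩ := Nat.exists_eq_add_of_le hab
  rw [pIter_add, h]; rfl

lemma pIter_inj (hg : ∀ a b c, g a = some c → g b = some c → a = b) {k : ℕ} {a b c : σ}
    (ha : pIter g k a = some c) (hb : pIter g k b = some c) : a = b := by
  induction k generalizing a b with
  | zero => simp [pIter] at ha hb; rw [ha, hb]
  | succ k ih =>
      simp only [pIter] at ha hb
      rcases ha' : g a with _ | a' <;> rw [ha'] at ha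
      · simp at ha
      rcases hb' : g b with _ | b' <;> rw [hb'] at hb
      · simp at hb
      simp only [Option.bind_some] at ha hb
      have := ih ha hb
      exact hg a b a' ha' (this ▸ hb')

/-- a point surviving forever-many steps lies on a cycle, via pigeonhole on `m` elements -/
lemma exists_cycle {m : ℕ} {f : Fin m → Option (Fin m)} (hf : IsPInj m f) {x : Fin m}
    (hx : pIter f m x ≠ none) : ∃ k, 0 < k ∧ pIter f k x = some x := by
  have halive : ∀ i ≤ m, ∃ y, pIter f i x = some y := by
    intro i hi
    rcases h : pIter f i x with _ | y
    · exact absurd (pIter_none_mono h hi) hx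
    · exact ⟨y, rfl⟩
  set v : ℕ → Fin m := fun i => (pIter f i x).getD x with hv
  have hcard : (Finset.univ : Finset (Fin m)).card < (Finset.range (m+1)).card := by simp
  obtain ⟨i, hi, j, hj, hne, heq⟩ :=
    Finset.exists_ne_map_eq_of_card_lt_of_maps_to hcard
      (f := v) (fun i _ => Finset.mem_univ _)
  wlog hij : i < j generalizing i j
  · exact this j hj i hi hne.symm heq.symm (by omega)
  obtain ⟨u, hu⟩ := halive i (Nat.lt_succ_iff.mp (Finset.mem_range.mp hi))
  obtain ⟨w, hw⟩ := halive j (Nat.lt_succ_iff.mp (Finset.mem_range.mp hj))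
  have huw : u = w := by
    have : v i = v j := heq
    rw [hv] at this; simp only [hu, hw, Option.getD_some] at this; exact this
  subst huw
  -- pIter f j x = pIter f ((j-i) + i) x = (pIter f (j-i) x).bind (pIter f i)
  have hsplit : pIter f j x = (pIter f (j-i) x).bind (pIter f i) := by
    have h2 := pIter_add (g := f) (j-i) i x
    rwa [Nat.sub_add_cancel hij.le] at h2
  rw [hw] at hsplit
  rcases hmid : pIter f (j-i) x with _ | z
  · rw [hmid] at hsplit; simp at hsplit
  · rw [hmid] at hsplit; simp only [Option.bind_some] at hsplit
    have : x = z := pIter_inj hf hu hsplit.symm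
    exact ⟨j - i, by omega, this ▸ hmid⟩


lemma cycle_alive {k : ℕ} (hk : 0 < k) {x : σ} (hc : pIter g k x = some x) :
    ∀ j, pIter g j x ≠ none := by
  intro j
  induction j using Nat.strong_induction_on with
  | _ j ih =>
    rcases le_or_gt j k with h | h
    · intro hn; rw [pIter_none_mono hn h] at hc; exact absurd hc (by simp)
    · have h2 := pIter_add (g := g) k (j - k) x
      rw [Nat.add_sub_cancel' h.le, hc, Option.bind_some] at h2
      rw [h2]; exact ih (j - k) (by omega)

/-- transport of iteration along a "restriction compatibility" -/
lemma pIter_map_val {n : ℕ} {f : Fin n → Option (Fin n)} {p : Fin n → Prop}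
    {g : {x // p x} → Option {x // p x}}
    (compat : ∀ s : {x // p x}, f s.val = (g s).map Subtype.val) :
    ∀ (k : ℕ) (s : {x // p x}),
      Option.map Subtype.val (pIter g k s) = pIter f k s.val := by
  intro k
  induction k with
  | zero => intro s; rfl
  | succ k ih =>
      intro s
      show Option.map _ ((g s).bind (pIter g k)) = (f s.val).bind (pIter f k)
      rw [compat s]
      cases g s with
      | none => rfl
      | some y => simpa using ih y

/-- transport of iteration along an equivalence -/
lemma pIter_conj {τ : Type*} (e : σ ≃ τ) (g : σ → Option σ) :
    ∀ (k : ℕ) (x : σ),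
      pIter (fun t => (g (e.symm t)).map e) k (e x) = (pIter g k x).map e := by
  intro k
  induction k with
  | zero => intro x; rfl
  | succ k ih =>
      intro x
      show ((g (e.symm (e x))).map e).bind _ = ((g x).bind (pIter g k)).map e
      rw [e.symm_apply_apply]
      cases g x with
      | none => rfl
      | some y => simpa using ih y

lemma alive_step {m : ℕ} {f : Fin m → Option (Fin m)} (hf : IsPInj m f) {x : Fin m}
    (hx : pIter f m x ≠ none) : ∃ y, f x = some y ∧ pIter f m y ≠ none := by
  obtain ⟨k, hk, hc⟩ := exists_cycle hf hx
  obtain ⟨k, rfl⟩ : ∃ j, k = j + 1 := ⟨k - 1, by omega⟩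
  have h1 : pIter f (k + 1 + k) x = (pIter f (k+1) x).bind (pIter f k) := pIter_add _ _ _
  rw [hc, Option.bind_some] at h1
  -- f x = some y
  have h0 : pIter f (k+1) x = (f x).bind (pIter f k) := rfl
  rcases hy : f x with _ | y
  · rw [hy] at h0; rw [h0] at hc; exact absurd hc (by simp)
  refine ⟨y, rfl, ?_⟩
  have hA : pIter f (k + 2) x = pIter f (k + 1) y := by
    have := pIter_add (g := f) 1 (k + 1) x
    rw [show (1 : ℕ) + (k + 1) = k + 2 by omega] at this
    rw [this]; simp [pIter, hy]
  have hB : pIter f (k + 2) x = some y := by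
    have := pIter_add (g := f) (k + 1) 1 x
    rw [show k + 1 + 1 = k + 2 by omega] at this
    rw [this, hc]; simp [pIter, hy]
  exact cycle_alive (by omega) (hA ▸ hB) m

lemma alive_back {m : ℕ} {f : Fin m → Option (Fin m)} (hf : IsPInj m f) {x y : Fin m}
    (hxy : f x = some y) (hy : pIter f m y ≠ none) : pIter f m x ≠ none := by
  obtain ⟨k, hk, hc⟩ := exists_cycle hf hy
  -- find cycle preimage z of y
  obtain ⟨k, rfl⟩ : ∃ j, k = j + 1 := ⟨k - 1, by omega⟩
  have h1 : pIter f (k + 1) y = (pIter f k y).bind (pIter f 1) := pIter_add _ _ _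
  rw [hc] at h1
  rcases hz : pIter f k y with _ | z
  · rw [hz] at h1; exact absurd h1.symm (by simp)
  rw [hz, Option.bind_some] at h1
  have hfz : f z = some y := by
    have : pIter f 1 z = f z := by simp [pIter]
    rw [this] at h1; exact h1.symm
  have hxz : x = z := hf x z y hxy hfz
  subst hxz
  -- x is on a cycle: pIter f (k+1) x = some x via y
  have h8 : pIter f (k + 1) x = some x := by
    have h5 : pIter f (1 + k) x = (f x).bind (pIter f k) := by
      have := pIter_add (g := f) 1 k x
      rw [this]; simp [pIter]
    rw [Nat.add_comm 1 k] at h5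
    rw [h5, hxy, Option.bind_some, hz]
  exact cycle_alive (by omega) h8 m

lemma nilpotent_iff_raw {m : ℕ} {f : Fin m → Option (Fin m)} (hf : IsPInj m f) :
    (∃ k, 0 < k ∧ ∀ x, pIter f k x = none) ↔ ∀ x, pIter f m x = none := by
  constructor
  · rintro ⟨k, hk, hnil⟩ x
    by_contra hx
    obtain ⟨j, hj, hc⟩ := exists_cycle hf hx
    exact cycle_alive hj hc k (hnil x)
  · intro h
    exact ⟨m + 1, by omega, fun x => pIter_none_mono (h x) (by omega)⟩


end Aux


namespace Aux

/-- the set of cyclic (= forever-alive) points of a partial injection -/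
def cyc (n : ℕ) (α : PInj n) : Finset (Fin n) :=
  Finset.univ.filter (fun x => iterMap n α.val n x ≠ none)

lemma mem_cyc {n : ℕ} {α : PInj n} {x : Fin n} :
    x ∈ cyc n α ↔ pIter α.val n x ≠ none := by
  simp [cyc, iterMap_eq_pIter]

lemma nilpotent_iff {m : ℕ} (β : PInj m) :
    Nilpotent m β ↔ ∀ x, pIter β.val m x = none := by
  unfold Nilpotent
  rw [iterMap_eq_pIter]
  exact nilpotent_iff_raw β.2

section Fiber

variable {n : ℕ} (A : Finset (Fin n))

lemma card_compl_subtype : Fintype.card {x : Fin n // x ∉ A} = n - A.card := by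
  have h1 : Fintype.card {x : Fin n // x ∈ A} = A.card := Fintype.card_coe A
  have := Fintype.card_subtype_compl (fun x : Fin n => x ∈ A)
  simp only [Fintype.card_fin] at this
  rw [this, h1]

noncomputable def eA : {x : Fin n // x ∉ A} ≃ Fin (n - A.card) :=
  Fintype.equivFinOfCardEq (card_compl_subtype A)

variable {A}

-- facts about α with cyc α = A
lemma step_isSome {α : PInj n} (hα : cyc n α = A) {a : Fin n} (ha : a ∈ A) :
    (α.val a).isSome := by
  rw [← hα, mem_cyc] at ha
  obtain ⟨y, hy, _⟩ := alive_step α.2 ha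
  rw [hy]; rfl

lemma step_mem {α : PInj n} (hα : cyc n α = A) {a : Fin n} (ha : a ∈ A) :
    (α.val a).get (step_isSome hα ha) ∈ A := by
  have ha' := ha
  rw [← hα, mem_cyc] at ha'
  obtain ⟨y, hy, hy2⟩ := alive_step α.2 ha'
  have : (α.val a).get (step_isSome hα ha) = y := by simp [hy]
  rw [this, ← hα, mem_cyc]
  exact hy2

lemma step_not_mem {α : PInj n} (hα : cyc n α = A) {x y : Fin n} (hx : x ∉ A)
    (hxy : α.val x = some y) : y ∉ A := by
  intro hy
  apply hx
  rw [← hα, mem_cyc] at hy ⊢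
  exact alive_back α.2 hxy hy

/-- the permutational part -/
noncomputable def permOf {α : PInj n} (hα : cyc n α = A) :
    Equiv.Perm {x : Fin n // x ∈ A} :=
  Equiv.ofBijective
    (fun a => ⟨(α.val a.val).get (step_isSome hα a.2), step_mem hα a.2⟩)
    (by
      rw [← Finite.injective_iff_bijective]
      intro a b hab
      have h1 : α.val a.val = some ((α.val a.val).get (step_isSome hα a.2)) :=
        (Option.some_get _).symm
      have h2 : α.val b.val = some ((α.val b.val).get (step_isSome hα b.2)) :=
        (Option.some_get _).symm
      have hval : ((α.val a.val).get (step_isSome hα a.2)) = ((α.val b.val).get (step_isSome hα b.2)) :=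
        congrArg Subtype.val hab
      exact Subtype.ext (α.2 a.val b.val _ h1 (hval ▸ h2)))

/-- restriction of `α` to the complement of `A` -/
def gRes {α : PInj n} (hα : cyc n α = A) :
    {x : Fin n // x ∉ A} → Option {x : Fin n // x ∉ A} :=
  fun s => (α.val s.val).pmap (fun y hy => ⟨y, hy⟩)
    (fun y hy => step_not_mem hα s.2 hy)

lemma map_val_pmap {τ : Type*} {p : τ → Prop} (o : Option τ) (H : ∀ a ∈ o, p a) :
    Option.map Subtype.val (o.pmap (fun y hy => (⟨y, hy⟩ : {x // p x})) H) = o := by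
  cases o <;> rfl

lemma gRes_compat {α : PInj n} (hα : cyc n α = A) (s : {x : Fin n // x ∉ A}) :
    α.val s.val = (gRes hα s).map Subtype.val :=
  (map_val_pmap _ _).symm

/-- the nilpotent part, transported to `Fin (n - A.card)` -/
noncomputable def nilpFunOf {α : PInj n} (hα : cyc n α = A) :
    Fin (n - A.card) → Option (Fin (n - A.card)) :=
  fun t => (gRes hα ((eA A).symm t)).map (eA A)

lemma nilpFunOf_isPInj {α : PInj n} (hα : cyc n α = A) :
    IsPInj (n - A.card) (nilpFunOf hα) := by
  intro a b c ha hb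
  unfold nilpFunOf at ha hb
  rcases h1 : gRes hα ((eA A).symm a) with _ | u
  · rw [h1] at ha; exact absurd ha (by simp)
  rcases h2 : gRes hα ((eA A).symm b) with _ | v
  · rw [h2] at hb; exact absurd hb (by simp)
  rw [h1] at ha; rw [h2] at hb
  simp only [Option.map_some] at ha hb
  have huv : u = v := (eA A).injective (Option.some_injective _ (ha.trans hb.symm))
  subst huv
  -- now: α.val of the two points equals some u.val
  have e1 : α.val ((eA A).symm a).val = some u.val := by
    rw [gRes_compat hα, h1]; rfl
  have e2 : α.val ((eA A).symm b).val = some u.val := by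
    rw [gRes_compat hα, h2]; rfl
  have := α.2 _ _ _ e1 e2
  have : ((eA A).symm a) = ((eA A).symm b) := Subtype.ext this
  exact (eA A).symm.injective this

lemma nilpFunOf_nilpotent {α : PInj n} (hα : cyc n α = A) :
    ∀ t, pIter (nilpFunOf hα) (n+1) t = none := by
  intro t
  have hform : pIter (nilpFunOf hα) (n+1) ((eA A) ((eA A).symm t))
      = (pIter (gRes hα) (n+1) ((eA A).symm t)).map (eA A) := by
    exact pIter_conj (eA A) (gRes hα) (n+1) ((eA A).symm t)
  rw [(eA A).apply_symm_apply] at hform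
  rw [hform]
  have hval := pIter_map_val (gRes_compat hα) (n+1) ((eA A).symm t)
  have hdead : pIter α.val (n+1) ((eA A).symm t).val = none := by
    have hx : pIter α.val n ((eA A).symm t).val = none := by
      have h3 : ((eA A).symm t).val ∉ cyc n α := by rw [hα]; exact ((eA A).symm t).2
      rw [mem_cyc] at h3
      exact not_not.mp h3
    exact pIter_none_mono hx (by omega)
  rw [hdead] at hval
  rcases h : pIter (gRes hα) (n+1) ((eA A).symm t) with _ | u
  · rfl
  · rw [h] at hval; exact absurd hval (by simp)

variable (A) in
/-- glue a permutation of `A` with a partial map off `A` -/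
def extFun (σ : Equiv.Perm {x : Fin n // x ∈ A})
    (g : {x : Fin n // x ∉ A} → Option {x : Fin n // x ∉ A}) : Fin n → Option (Fin n) :=
  fun x => if h : x ∈ A then some (σ ⟨x, h⟩).val else (g ⟨x, h⟩).map Subtype.val

lemma extFun_compat (σ : Equiv.Perm {x : Fin n // x ∈ A})
    (g : {x : Fin n // x ∉ A} → Option {x : Fin n // x ∉ A}) (s : {x : Fin n // x ∉ A}) :
    extFun A σ g s.val = (g s).map Subtype.val := by
  unfold extFun
  rw [dif_neg s.2]

lemma extFun_isPInj (σ : Equiv.Perm {x : Fin n // x ∈ A})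
    (g : {x : Fin n // x ∉ A} → Option {x : Fin n // x ∉ A})
    (hg : ∀ s t u, g s = some u → g t = some u → s = t) :
    IsPInj n (extFun A σ g) := by
  intro a b c ha hb
  unfold extFun at ha hb
  by_cases h1 : a ∈ A <;> by_cases h2 : b ∈ A
  · rw [dif_pos h1] at ha; rw [dif_pos h2] at hb
    have : (σ ⟨a, h1⟩) = (σ ⟨b, h2⟩) := by
      apply Subtype.ext
      have e1 := Option.some_injective _ ha
      have e2 := Option.some_injective _ hb
      rw [e1, e2]
    exact congrArg Subtype.val (σ.injective this)
  · exfalso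
    rw [dif_pos h1] at ha; rw [dif_neg h2] at hb
    rcases hu : g ⟨b, h2⟩ with _ | u
    · rw [hu] at hb; exact absurd hb (by simp)
    rw [hu, Option.map_some] at hb
    have e1 := Option.some_injective _ ha
    have e2 := Option.some_injective _ hb
    exact u.2 (by rw [e2, ← e1]; exact (σ ⟨a, h1⟩).2)
  · exfalso
    rw [dif_neg h1] at ha; rw [dif_pos h2] at hb
    rcases hu : g ⟨a, h1⟩ with _ | u
    · rw [hu] at ha; exact absurd ha (by simp)
    rw [hu, Option.map_some] at ha
    have e1 := Option.some_injective _ ha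
    have e2 := Option.some_injective _ hb
    exact u.2 (by rw [e1, ← e2]; exact (σ ⟨b, h2⟩).2)
  · rw [dif_neg h1] at ha; rw [dif_neg h2] at hb
    rcases hu : g ⟨a, h1⟩ with _ | u
    · rw [hu] at ha; exact absurd ha (by simp)
    rcases hv : g ⟨b, h2⟩ with _ | v
    · rw [hv] at hb; exact absurd hb (by simp)
    rw [hu, Option.map_some] at ha
    rw [hv, Option.map_some] at hb
    have huv : u = v := Subtype.ext (by
      rw [Option.some_injective _ ha, Option.some_injective _ hb])
    have := hg _ _ _ hu (huv ▸ hv)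
    exact congrArg Subtype.val this

lemma extFun_perm_alive (σ : Equiv.Perm {x : Fin n // x ∈ A})
    (g : {x : Fin n // x ∉ A} → Option {x : Fin n // x ∉ A}) :
    ∀ (k : ℕ) (a : Fin n) (ha : a ∈ A),
      pIter (extFun A σ g) k a = some ((σ ^ k) ⟨a, ha⟩).val := by
  intro k
  induction k with
  | zero => intro a ha; simp [pIter]
  | succ k ih =>
      intro a ha
      show (extFun A σ g a).bind _ = _
      rw [show extFun A σ g a = some (σ ⟨a, ha⟩).val from dif_pos ha, Option.bind_some,
        ih _ (σ ⟨a, ha⟩).2, pow_succ]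
      rfl

lemma extFun_cyc (σ : Equiv.Perm {x : Fin n // x ∈ A})
    (g : {x : Fin n // x ∉ A} → Option {x : Fin n // x ∉ A})
    (hpinj : IsPInj n (extFun A σ g))
    (hdead : ∀ s : {x : Fin n // x ∉ A}, pIter g n s = none) :
    cyc n ⟨extFun A σ g, hpinj⟩ = A := by
  ext x
  refine Iff.trans (mem_cyc (α := (⟨extFun A σ g, hpinj⟩ : PInj n))) ?_
  show pIter (extFun A σ g) n x ≠ none ↔ x ∈ A
  constructor
  · intro hx
    by_contra h
    apply hx
    have hval := pIter_map_val (extFun_compat σ g) n ⟨x, h⟩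
    rw [hdead ⟨x, h⟩] at hval
    exact hval.symm
  · intro hx
    rw [extFun_perm_alive σ g n x hx]
    simp

lemma gRes_eq {α : PInj n} (hα : cyc n α = A) (s : {x : Fin n // x ∉ A})
    {u : {x : Fin n // x ∉ A}} (h : α.val s.val = some u.val) : gRes hα s = some u := by
  have hmv : Option.map Subtype.val (gRes hα s) = some u.val := by
    rw [← gRes_compat hα, h]
  rcases hg : gRes hα s with _ | v
  · rw [hg] at hmv; exact absurd hmv (by simp)
  · rw [hg, Option.map_some] at hmv
    exact congrArg some (Subtype.ext (Option.some_injective _ hmv))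

lemma gRes_none {α : PInj n} (hα : cyc n α = A) (s : {x : Fin n // x ∉ A})
    (h : α.val s.val = none) : gRes hα s = none := by
  have hmv : Option.map Subtype.val (gRes hα s) = none := by
    rw [← gRes_compat hα, h]
  rcases hg : gRes hα s with _ | v
  · rfl
  · rw [hg, Option.map_some] at hmv; exact absurd hmv (by simp)

variable (A) in
noncomputable def fiberEquiv :
    {α : PInj n // cyc n α = A} ≃
      Equiv.Perm {x : Fin n // x ∈ A} × {β : PInj (n - A.card) // Nilpotent (n - A.card) β} where
  toFun α :=
    (permOf α.2,
     ⟨⟨nilpFunOf α.2, nilpFunOf_isPInj α.2⟩,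
        ⟨n + 1, by omega, fun t => by
          rw [iterMap_eq_pIter]; exact nilpFunOf_nilpotent α.2 t⟩⟩)
  invFun p :=
    ⟨⟨extFun A p.1 (fun s => (p.2.val.val ((eA A) s)).map (eA A).symm),
      extFun_isPInj p.1 _ (by
        intro s t u hs ht
        rcases h1 : p.2.val.val ((eA A) s) with _ | u1
        · rw [h1] at hs; exact absurd hs (by simp)
        rcases h2 : p.2.val.val ((eA A) t) with _ | u2
        · rw [h2] at ht; exact absurd ht (by simp)
        rw [h1, Option.map_some] at hs
        rw [h2, Option.map_some] at ht
        have : u1 = u2 := (eA A).symm.injective (by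
          rw [Option.some_injective _ hs, Option.some_injective _ ht])
        subst this
        exact (eA A).injective (p.2.val.2 _ _ _ h1 h2))⟩, by
      apply extFun_cyc
      intro s
      -- pIter g' n s = none
      have hconj := pIter_conj (eA A).symm p.2.val.val n ((eA A) s)
      rw [Equiv.symm_apply_apply] at hconj
      have hm := (nilpotent_iff p.2.val).mp p.2.2 ((eA A) s)
      have hdead : pIter p.2.val.val n ((eA A) s) = none :=
        pIter_none_mono hm (Nat.sub_le n A.card)
      rw [hdead] at hconj
      exact hconj⟩
  left_inv := by
    rintro ⟨α, hα⟩
    apply Subtype.ext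
    apply Subtype.ext
    funext x
    show extFun A (permOf hα) (fun s => (nilpFunOf hα ((eA A) s)).map (eA A).symm) x = α.val x
    unfold extFun
    by_cases h : x ∈ A
    · rw [dif_pos h]
      show some ((α.val x).get (step_isSome hα h)) = α.val x
      exact Option.some_get _
    · rw [dif_neg h]
      -- inner: (nilpFunOf hα ((eA A) ⟨x,h⟩)).map (eA A).symm
      show ((nilpFunOf hα ((eA A) ⟨x, h⟩)).map (eA A).symm).map Subtype.val = α.val x
      unfold nilpFunOf
      rw [Equiv.symm_apply_apply]
      rcases hg : gRes hα ⟨x, h⟩ with _ | u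
      · have := gRes_compat hα ⟨x, h⟩
        rw [hg] at this
        simpa using this.symm
      · have := gRes_compat hα ⟨x, h⟩
        rw [hg, Option.map_some] at this
        simp only [Option.map_some, Equiv.symm_apply_apply]
        exact this.symm
  right_inv := by
    rintro ⟨σ, β⟩
    dsimp only
    refine Prod.ext ?_ ?_
    · apply Equiv.ext
      intro a
      apply Subtype.ext
      have hsome : extFun A σ (fun s => (β.val.val ((eA A) s)).map (eA A).symm) a.val
          = some (σ a).val := by
        unfold extFun; exact dif_pos a.2
      show (extFun A σ (fun s => (β.val.val ((eA A) s)).map (eA A).symm) a.val).get _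
          = (σ a).val
      simp only [hsome, Option.get_some]
    · apply Subtype.ext
      apply Subtype.ext
      funext t
      show nilpFunOf _ t = β.val.val t
      unfold nilpFunOf
      have hαval : extFun A σ (fun s => (β.val.val ((eA A) s)).map (eA A).symm)
          ((eA A).symm t).val = (β.val.val t).map (fun u => ((eA A).symm u).val) := by
        rw [extFun_compat, Equiv.apply_symm_apply, Option.map_map]
        rfl
      cases hb : β.val.val t with
      | none =>
          rw [hb, Option.map_none] at hαval
          refine (congrArg (Option.map (eA A)) (gRes_none _ ((eA A).symm t) ?_)).trans ?_; exact hαval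
          rfl
      | some u =>
          rw [hb, Option.map_some] at hαval
          refine (congrArg (Option.map (eA A)) (gRes_eq _ ((eA A).symm t) (u := (eA A).symm u) ?_)).trans ?_; exact hαval
          simp only [Option.map_some, Equiv.apply_symm_apply]

end Fiber

noncomputable def NC (m : ℕ) : ℕ := Nat.card {β : PInj m // Nilpotent m β}

lemma NC_eq (m : ℕ) : NC m = Set.ncard {β : PInj m | Nilpotent m β} := by
  rw [← Nat.card_coe_set_eq]
  rfl

lemma card_fiber {n : ℕ} (A : Finset (Fin n)) :
    Nat.card {α : PInj n // cyc n α = A} = A.card.factorial * NC (n - A.card) := by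
  rw [Nat.card_congr (fiberEquiv A), Nat.card_prod]
  congr 1
  · rw [Nat.card_eq_fintype_card, Fintype.card_perm]
    congr 1
    simp [Fintype.card_subtype]

lemma main_count (n : ℕ) :
    Nat.card (PInj n)
      = ∑ k ∈ Finset.range (n + 1), n.descFactorial k * NC (n - k) := by
  classical
  rw [Nat.card_eq_fintype_card]
  have h1 : Fintype.card (PInj n)
      = ∑ A ∈ (Finset.univ : Finset (Finset (Fin n))),
          ((Finset.univ : Finset (PInj n)).filter (fun α => cyc n α = A)).card := by
    rw [← Finset.card_univ]
    exact Finset.card_eq_sum_card_fiberwise (fun α _ => Finset.mem_univ _)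
  rw [h1]
  have h2 : ∀ A : Finset (Fin n),
      ((Finset.univ : Finset (PInj n)).filter (fun α => cyc n α = A)).card
        = A.card.factorial * NC (n - A.card) := by
    intro A
    rw [← Fintype.card_subtype, ← Nat.card_eq_fintype_card, card_fiber A]
  simp only [h2]
  rw [← Finset.sum_fiberwise_of_maps_to
    (g := fun A : Finset (Fin n) => A.card) (t := Finset.range (n + 1))
    (fun A _ => Finset.mem_range.mpr (Nat.lt_succ_of_le
      (le_trans (Finset.card_le_univ A) (by simp))))]
  apply Finset.sum_congr rfl
  intro k hk
  have h3 : ∀ A ∈ (Finset.univ : Finset (Finset (Fin n))).filter (fun A => A.card = k),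
      A.card.factorial * NC (n - A.card) = k.factorial * NC (n - k) := by
    intro A hA
    rw [(Finset.mem_filter.mp hA).2]
  rw [Finset.sum_congr rfl h3, Finset.sum_const, smul_eq_mul]
  have h4 : ((Finset.univ : Finset (Finset (Fin n))).filter (fun A => A.card = k)).card
      = n.choose k := by
    have : (Finset.univ : Finset (Finset (Fin n))).filter (fun A => A.card = k)
        = Finset.powersetCard k (Finset.univ : Finset (Fin n)) := by
      rw [Finset.powersetCard_eq_filter, Finset.powerset_univ]
    rw [this, Finset.card_powersetCard]
    simp
  rw [h4, Nat.descFactorial_eq_factorial_mul_choose]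
  ring

end Aux

theorem stmt18 (n : ℕ) :
    Nat.card (PInj n)
      = ∑ k ∈ Finset.range (n + 1),
          n.descFactorial k * Set.ncard {α : PInj (n - k) | Nilpotent (n - k) α} := by
  rw [Aux.main_count n]
  apply Finset.sum_congr rfl
  intro k _
  rw [Aux.NC_eq]
end

section
/- For every n ≥ 1: sum over k from 0 to n of (-1)^k * |IS_{n-k}| * binom(n,k)^2 * k! = 1, where |IS_m| = sum_j binom(m,j)^2 * j!. -/
lemma key19 (n k j : ℕ) (h : k + j ≤ n) :
    n.choose k ^ 2 * k.factorial * ((n - k).choose j ^ 2 * j.factorial)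
      = (k + j).choose k * (n.choose (k + j) ^ 2 * (k + j).factorial) := by
  have hkm : k ≤ k + j := Nat.le_add_right _ _
  have A : n.choose (k + j) * (k + j).choose k = n.choose k * (n - k).choose j := by
    have := Nat.choose_mul (n := n) hkm
    simpa [Nat.add_sub_cancel_left] using this
  have B : (k + j).choose k * k.factorial * j.factorial = (k + j).factorial := by
    have := Nat.choose_mul_factorial_mul_factorial hkm
    simpa [Nat.add_sub_cancel_left] using this
  calc n.choose k ^ 2 * k.factorial * ((n - k).choose j ^ 2 * j.factorial)
      = (n.choose k * (n - k).choose j) ^ 2 * (k.factorial * j.factorial) := by ring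
    _ = (n.choose (k + j) * (k + j).choose k) ^ 2 * (k.factorial * j.factorial) := by rw [A]
    _ = (k + j).choose k * (n.choose (k + j) ^ 2 * ((k + j).choose k * k.factorial * j.factorial)) := by
        ring
    _ = (k + j).choose k * (n.choose (k + j) ^ 2 * (k + j).factorial) := by rw [B]

theorem stmt19 (n : ℕ) (h : 1 ≤ n) :
    ∑ k ∈ Finset.range (n + 1),
        (-1 : ℤ) ^ k * (cardIS (n - k) : ℤ) * (((n.choose k) ^ 2 * k.factorial : ℕ) : ℤ)
      = 1 := by
  have step1 : ∀ k ∈ Finset.range (n + 1),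
      (-1 : ℤ) ^ k * (cardIS (n - k) : ℤ) * (((n.choose k) ^ 2 * k.factorial : ℕ) : ℤ)
        = ∑ m ∈ Finset.range (n + 1),
            (-1 : ℤ) ^ k * (m.choose k : ℤ) * (((n.choose m) ^ 2 * m.factorial : ℕ) : ℤ) := by
    intro k hk
    rw [Finset.mem_range, Nat.lt_succ_iff] at hk
    have e1 : (-1 : ℤ) ^ k * (cardIS (n - k) : ℤ) * (((n.choose k) ^ 2 * k.factorial : ℕ) : ℤ)
        = ∑ j ∈ Finset.range (n - k + 1),
            (-1 : ℤ) ^ k * ((k + j).choose k : ℤ)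
              * (((n.choose (k + j)) ^ 2 * (k + j).factorial : ℕ) : ℤ) := by
      unfold cardIS
      push_cast
      rw [Finset.mul_sum, Finset.sum_mul]
      refine Finset.sum_congr rfl fun j hj => ?_
      rw [Finset.mem_range, Nat.lt_succ_iff] at hj
      have hj' : k + j ≤ n := by omega
      have hz := congrArg (Nat.cast : ℕ → ℤ) (key19 n k j hj')
      push_cast at hz
      linear_combination (-1 : ℤ) ^ k * hz
    rw [e1]
    have e2 : ∑ j ∈ Finset.range (n - k + 1),
          (-1 : ℤ) ^ k * ((k + j).choose k : ℤ)
            * (((n.choose (k + j)) ^ 2 * (k + j).factorial : ℕ) : ℤ)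
        = ∑ m ∈ Finset.Ico k (n + 1),
            (-1 : ℤ) ^ k * (m.choose k : ℤ) * (((n.choose m) ^ 2 * m.factorial : ℕ) : ℤ) := by
      rw [Finset.sum_Ico_eq_sum_range]
      have : n + 1 - k = n - k + 1 := by omega
      rw [this]
    rw [e2]
    rw [Finset.range_eq_Ico, ← Finset.sum_Ico_consecutive _ (Nat.zero_le k) (by omega : k ≤ n + 1)]
    have hzero : ∑ m ∈ Finset.Ico 0 k,
        (-1 : ℤ) ^ k * (m.choose k : ℤ) * (((n.choose m) ^ 2 * m.factorial : ℕ) : ℤ) = 0 := by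
      refine Finset.sum_eq_zero fun m hm => ?_
      have : m < k := (Finset.mem_Ico.mp hm).2
      simp [Nat.choose_eq_zero_of_lt this]
    rw [hzero, zero_add]
  rw [Finset.sum_congr rfl step1, Finset.sum_comm]
  have step2 : ∀ m ∈ Finset.range (n + 1),
      ∑ k ∈ Finset.range (n + 1),
          (-1 : ℤ) ^ k * (m.choose k : ℤ) * (((n.choose m) ^ 2 * m.factorial : ℕ) : ℤ)
        = (if m = 0 then 1 else 0) * (((n.choose m) ^ 2 * m.factorial : ℕ) : ℤ) := by
    intro m hm
    rw [Finset.mem_range, Nat.lt_succ_iff] at hm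
    rw [← Finset.sum_mul]
    congr 1
    rw [← Int.alternating_sum_range_choose]
    symm
    refine Finset.sum_subset (Finset.range_subset_range.mpr (by omega)) fun k _ hk => ?_
    rw [Finset.mem_range, Nat.lt_succ_iff, not_le] at hk
    simp [Nat.choose_eq_zero_of_lt hk]
  rw [Finset.sum_congr rfl step2]
  simp
end
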